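/- Let F : Type u ⥤ Type u be finitary (preserve filtered colimits) and preserve finite intersections (for any two subsets A, B ⊆ X, the image of F.map applied to the inclusion (A ∩ B) ↪ X equals the intersection of the images of F.map applied to the inclusions A ↪ X and B ↪ X, and F.map of every injection is injective). Then F preserves arbitrary intersections: for every set X and every family of subsets (A_i)_{i : ι} of X, the image of F.map applied to the inclusion (⋂ i, A_i) ↪ X equals the intersection over i of the images of F.map applied to the inclusions A_i ↪ X. -/

import Mathlib

open CategoryTheory CategoryTheory.Limits

universe w u

/-- The diagram of finite subsets of `X`. -/
def finsetDiagram (X : Type u) : Finset X ⥤ Type u where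
  obj M := {x : X // x ∈ M}
  map {M N} h := TypeCat.ofHom (fun x => ⟨x.1, h.le x.2⟩)

/-- The cocone over `finsetDiagram X` with apex `X`. -/
def finsetCocone (X : Type u) : Cocone (finsetDiagram X) where
  pt := X
  ι := { app := fun M => TypeCat.ofHom (fun x => x.1) }

noncomputable def finsetCoconeIsColimit (X : Type u) : IsColimit (finsetCocone X) := by
  classical
  exact Types.FilteredColimit.isColimitOf _ _
    (fun x => ⟨{x}, (⟨x, Finset.mem_singleton_self x⟩ : {y : X // y ∈ ({x} : Finset X)}), rfl⟩)
    (fun i j xi xj h => ⟨i ⊔ j, homOfLE le_sup_left, homOfLE le_sup_right,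
      Subtype.ext (by exact h)⟩)

theorem range_incl_mono (F : Type u ⥤ Type u) {X : Type u} {B C : Set X} (h : B ⊆ C) :
    Set.range (F.map (TypeCat.ofHom (Subtype.val : ↥B → X))) ⊆ Set.range (F.map (TypeCat.ofHom (Subtype.val : ↥C → X))) := by
  rintro _ ⟨s, rfl⟩
  refine ⟨F.map (TypeCat.ofHom (Set.inclusion h)) s, ?_⟩
  have : TypeCat.ofHom (Subtype.val : ↥B → X) = TypeCat.ofHom (Set.inclusion h) ≫ TypeCat.ofHom (Subtype.val : ↥C → X) := rfl
  rw [this, F.map_comp]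
  rfl

theorem range_incl_congr (F : Type u ⥤ Type u) {X : Type u} {B C : Set X} (h : B = C) :
    Set.range (F.map (TypeCat.ofHom (Subtype.val : ↥B → X))) = Set.range (F.map (TypeCat.ofHom (Subtype.val : ↥C → X))) := by
  subst h; rfl

theorem finitely_bounded (F : Type u ⥤ Type u) [PreservesFilteredColimits F]
    {X : Type u} (t : F.obj X) :
    ∃ M : Finset X, t ∈ Set.range (F.map (TypeCat.ofHom (Subtype.val : ↥(↑M : Set X) → X))) := by
  have hc := isColimitOfPreserves F (finsetCoconeIsColimit X)
  obtain ⟨M, y, hy⟩ := Types.jointly_surjective _ hc t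
  exact ⟨M, y, hy⟩

theorem aux_sInter (F : Type u ⥤ Type u)
    (hfin : ∀ {X : Type u} (A B : Set X),
      Set.range (F.map (TypeCat.ofHom (Subtype.val : ↥(A ∩ B) → X))) =
        Set.range (F.map (TypeCat.ofHom (Subtype.val : ↥A → X))) ∩
          Set.range (F.map (TypeCat.ofHom (Subtype.val : ↥B → X))))
    {X : Type u} (t : F.obj X) (S : Set (Set X)) (hS : S.Finite) :
    ∀ (C : Set X), t ∈ Set.range (F.map (TypeCat.ofHom (Subtype.val : ↥C → X))) →
      (∀ B ∈ S, t ∈ Set.range (F.map (TypeCat.ofHom (Subtype.val : ↥B → X)))) →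
      t ∈ Set.range (F.map (TypeCat.ofHom (Subtype.val : ↥(C ∩ ⋂₀ S) → X))) := by
  refine Set.Finite.induction_on
    (motive := fun (S : Set (Set X)) _ => ∀ (C : Set X), t ∈ Set.range (F.map (TypeCat.ofHom (Subtype.val : ↥C → X))) →
      (∀ B ∈ S, t ∈ Set.range (F.map (TypeCat.ofHom (Subtype.val : ↥B → X)))) →
      t ∈ Set.range (F.map (TypeCat.ofHom (Subtype.val : ↥(C ∩ ⋂₀ S) → X)))) S hS ?_ ?_
  · intro C hC _
    rwa [range_incl_congr F (by simp : C ∩ ⋂₀ (∅ : Set (Set X)) = C)]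
  · rintro B S' _ _ ih C hC hB
    have h1 := ih C hC (fun D hD => hB D (Set.mem_insert_of_mem _ hD))
    have h2 : t ∈ Set.range (F.map (TypeCat.ofHom (Subtype.val : ↥((C ∩ ⋂₀ S') ∩ B) → X))) := by
      rw [hfin]
      exact ⟨h1, hB B (Set.mem_insert _ _)⟩
    rwa [range_incl_congr F
      (by rw [Set.sInter_insert]; ext x; simp; tauto :
        (C ∩ ⋂₀ S') ∩ B = C ∩ ⋂₀ insert B S')] at h2

theorem preservesIntersections_of_finitary_of_preservesFiniteIntersections
    (F : Type u ⥤ Type u) [PreservesFilteredColimits F]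
    (hmono : ∀ {X Y : Type u} (m : X → Y), Function.Injective m →
      Function.Injective (F.map (TypeCat.ofHom m)))
    (hfin : ∀ {X : Type u} (A B : Set X),
      Set.range (F.map (TypeCat.ofHom (Subtype.val : ↥(A ∩ B) → X))) =
        Set.range (F.map (TypeCat.ofHom (Subtype.val : ↥A → X))) ∩
          Set.range (F.map (TypeCat.ofHom (Subtype.val : ↥B → X)))) :
    ∀ {X : Type u} {ι : Sort w} (A : ι → Set X),
      Set.range (F.map (TypeCat.ofHom (Subtype.val : ↥(⋂ i, A i) → X))) =
        ⋂ i, Set.range (F.map (TypeCat.ofHom (Subtype.val : ↥(A i) → X))) := by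
  intro X ι A
  apply subset_antisymm
  · exact Set.subset_iInter fun i => range_incl_mono F (Set.iInter_subset A i)
  · intro t ht
    simp only [Set.mem_iInter] at ht
    obtain ⟨M, hM⟩ := finitely_bounded F t
    set S : Set (Set X) := Set.range (fun i => (↑M : Set X) ∩ A i) with hSdef
    have hSfin : S.Finite := by
      apply Set.Finite.subset (M.finite_toSet.finite_subsets)
      rintro _ ⟨i, rfl⟩
      exact Set.inter_subset_left
    have hall : ∀ B ∈ S, t ∈ Set.range (F.map (TypeCat.ofHom (Subtype.val : ↥B → X))) := by
      rintro _ ⟨i, rfl⟩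
      rw [hfin]
      exact ⟨hM, ht i⟩
    have key := aux_sInter F hfin t S hSfin (↑M : Set X) hM hall
    refine range_incl_mono F ?_ key
    intro x hx
    rw [Set.mem_iInter]
    intro i
    exact (hx.2 ((↑M : Set X) ∩ A i) ⟨i, rfl⟩).2
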